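/- For F = {1,2}, the exceptional Hermite polynomials H_n^F satisfy for all n ≥ 0 the seven-term recurrence relation (4/3)n(n-1)(n-2) H_{n-3}^F(x) + 2n(n-1) H_{n-1}^F(x) + (n-2) H_{n+1}^F(x) + [(n-1)(n-2)/(6(n+1)(n+2))] H_{n+3}^F(x) = (4x^3/3 + 2x) H_n^F(x). -/

import Mathlib

open Polynomial

/-- The (physicists') Hermite polynomial `H_n`. -/
noncomputable def hermiteP (n : ℕ) : Polynomial ℝ :=
  (n.factorial : ℝ) •
    ∑ j ∈ Finset.range (n / 2 + 1),
      ((-1 : ℝ) ^ j / ((j.factorial : ℝ) * ((n - 2 * j).factorial : ℝ))) •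
        (C (2 : ℝ) * X) ^ (n - 2 * j)

lemma Ceq (a b c d e f : ℝ) (P : Polynomial ℝ) (h : a * b * c * 2 = d * e * f) :
    C a * (C b * (C c * P * C 2)) = C d * (C e * (C f * P)) := by
  calc C a * (C b * (C c * P * C 2)) = (C a * C b * C c * C 2) * P := by ring
    _ = C (a * b * c * 2) * P := by rw [← C_mul, ← C_mul, ← C_mul]
    _ = C (d * e * f) * P := by rw [h]
    _ = (C d * C e * C f) * P := by rw [C_mul, C_mul]
    _ = C d * (C e * (C f * P)) := by ring

lemma hP_deriv (n : ℕ) :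
    derivative (hermiteP (n+1)) = C (2*((n:ℝ)+1)) * hermiteP n := by
  unfold hermiteP
  rw [derivative_smul, map_sum]
  simp_rw [derivative_smul, derivative_pow, derivative_C_mul, derivative_X, mul_one,
    smul_eq_C_mul, Finset.mul_sum]
  have hterm : ∀ j, 2 * j ≤ n →
      C ((n+1).factorial : ℝ) *
        (C ((-1:ℝ) ^ j / ((j.factorial : ℝ) * ((n + 1 - 2 * j).factorial : ℝ))) *
          (C ((n + 1 - 2 * j : ℕ) : ℝ) * (C (2:ℝ) * X) ^ (n + 1 - 2 * j - 1) * C 2)) =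
      C (2 * ((n:ℝ) + 1)) *
        (C (n.factorial : ℝ) *
          (C ((-1:ℝ) ^ j / ((j.factorial : ℝ) * ((n - 2 * j).factorial : ℝ))) *
            (C (2:ℝ) * X) ^ (n - 2 * j))) := by
    intro j hj
    obtain ⟨m, hm1, hm2, hm3⟩ : ∃ m, n - 2*j = m ∧ n + 1 - 2*j = m + 1 ∧ n + 1 - 2*j - 1 = m :=
      ⟨n - 2*j, rfl, by omega, by omega⟩
    rw [hm2, hm1, Nat.add_sub_cancel]
    apply Ceq
    have h1 : (j.factorial : ℝ) ≠ 0 := by positivity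
    have h2 : (m.factorial : ℝ) ≠ 0 := by positivity
    rw [Nat.factorial_succ m, Nat.factorial_succ n]
    push_cast
    field_simp
  rcases Nat.even_or_odd n with ⟨k, hk⟩ | ⟨k, hk⟩
  · subst hk
    have hr : (k + k + 1) / 2 + 1 = (k + k) / 2 + 1 := by omega
    rw [hr]
    refine Finset.sum_congr rfl fun j hj => ?_
    exact hterm j (by simp at hj; omega)
  · subst hk
    have hr : (2 * k + 1 + 1) / 2 + 1 = ((2 * k + 1) / 2 + 1) + 1 := by omega
    rw [hr, Finset.sum_range_succ]
    have hz : (2 * k + 1 + 1 - 2 * ((2 * k + 1) / 2 + 1) : ℕ) = 0 := by omega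
    rw [hz]
    simp only [Nat.cast_zero, map_zero, zero_mul, mul_zero, zero_add, add_zero]
    refine Finset.sum_congr rfl fun j hj => ?_
    exact hterm j (by simp at hj; omega)

lemma pow_coeff_zero (e : ℕ) : ((C (2:ℝ) * X) ^ e).coeff 0 = if e = 0 then 1 else 0 := by
  rw [mul_pow, ← C_pow, coeff_C_mul, coeff_X_pow]
  rcases eq_or_ne e 0 with h | h
  · simp [h]
  · simp [h]
    omega

lemma hP_coeff_zero_even (k : ℕ) :
    (hermiteP (2*k)).coeff 0 = ((2*k).factorial : ℝ) * (-1)^k / (k.factorial : ℝ) := by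
  unfold hermiteP
  rw [coeff_smul, finset_sum_coeff]
  simp_rw [coeff_smul, pow_coeff_zero, smul_eq_mul]
  rw [Finset.sum_eq_single k]
  · have h : 2 * k - 2 * k = 0 := by omega
    rw [h]
    simp [Nat.factorial]
    ring
  · intro j hj hjk
    have : ¬ (2 * k - 2 * j = 0) := by simp at hj; omega
    simp [this]
  · intro h
    exfalso; apply h; simp

lemma hP_coeff_zero_odd (k : ℕ) : (hermiteP (2*k+1)).coeff 0 = 0 := by
  unfold hermiteP
  rw [coeff_smul, finset_sum_coeff]
  rw [Finset.sum_eq_zero, smul_zero]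
  intro j hj
  have : ¬ (2 * k + 1 - 2 * j = 0) := by simp at hj; omega
  simp [coeff_smul, pow_coeff_zero, this]

lemma hP0 : hermiteP 0 = 1 := by
  simp [hermiteP, Finset.sum_range_one]

lemma hP1 : hermiteP 1 = C 2 * X := by
  simp [hermiteP, Finset.sum_range_one]

lemma hP_coeff_zero_rec (n : ℕ) :
    (hermiteP (n+2)).coeff 0 = -(2*((n:ℝ)+1)) * (hermiteP n).coeff 0 := by
  rcases Nat.even_or_odd n with ⟨k, hk⟩ | ⟨k, hk⟩
  · subst hk
    rw [show k + k + 2 = 2 * (k + 1) by ring, show k + k = 2 * k by ring,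
      hP_coeff_zero_even, hP_coeff_zero_even]
    have h1 : (k.factorial : ℝ) ≠ 0 := by positivity
    have h2 : ((k+1).factorial : ℝ) ≠ 0 := by positivity
    rw [show 2 * (k + 1) = (2 * k + 1) + 1 by ring, Nat.factorial_succ, Nat.factorial_succ,
      Nat.factorial_succ k]
    push_cast
    field_simp
    ring
  · subst hk
    rw [show 2 * k + 1 + 2 = 2 * (k + 1) + 1 by ring, hP_coeff_zero_odd, hP_coeff_zero_odd]
    ring

lemma hP_rec : ∀ n : ℕ, hermiteP (n+1) = C 2 * X * hermiteP n - derivative (hermiteP n) := by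
  intro n
  induction n with
  | zero => rw [hP0, hP1]; simp
  | succ n ih =>
    have hd : derivative (hermiteP (n+2) - (C 2 * X * hermiteP (n+1) - derivative (hermiteP (n+1)))) = 0 := by
      simp only [derivative_sub, derivative_mul, derivative_C, derivative_X,
        hP_deriv n, hP_deriv (n+1)]
      push_cast
      rw [show (2*((n:ℝ)+1+1)) = 2 + 2*((n:ℝ)+1) by ring, C_add]
      linear_combination (C (2*((n:ℝ)+1))) * ih
    have hC := eq_C_of_derivative_eq_zero hd
    have hc0 : (hermiteP (n+2) - (C 2 * X * hermiteP (n+1) - derivative (hermiteP (n+1)))).coeff 0 = 0 := by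
      rw [coeff_sub, coeff_sub, mul_coeff_zero, mul_coeff_zero, hP_deriv n, coeff_C_mul,
        hP_coeff_zero_rec n]
      simp
    rw [hc0, map_zero, sub_eq_zero] at hC
    exact hC

/-- Hermite polynomial with integer index; zero for negative index. -/
noncomputable def hermiteZ (m : ℤ) : Polynomial ℝ :=
  if m < 0 then 0 else hermiteP m.toNat

lemma hZ_neg {m : ℤ} (h : m < 0) : hermiteZ m = 0 := if_pos h

lemma hZ_natcast (n : ℕ) : hermiteZ (n : ℤ) = hermiteP n := by
  simp [hermiteZ]

lemma hZ_deriv (m : ℤ) : derivative (hermiteZ m) = C (2*(m:ℝ)) * hermiteZ (m-1) := by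
  rcases lt_trichotomy m 0 with h | h | h
  · rw [hZ_neg h, hZ_neg (by omega : m - 1 < 0)]
    simp
  · subst h
    rw [show ((0:ℤ)) = ((0:ℕ):ℤ) from rfl, hZ_natcast, hP0]
    simp
  · obtain ⟨k, rfl⟩ : ∃ k : ℕ, m = (k:ℤ)+1 := ⟨(m-1).toNat, by omega⟩
    rw [show ((k:ℤ)+1) = (((k+1:ℕ)):ℤ) by push_cast; ring, hZ_natcast,
      show (((k+1:ℕ)):ℤ) - 1 = ((k:ℕ):ℤ) by push_cast; ring, hZ_natcast, hP_deriv]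
    congr 1
    push_cast
    ring

lemma hZ_rec (n : ℕ) :
    hermiteZ ((n:ℤ)+1) = C 2 * X * hermiteZ (n:ℤ) - derivative (hermiteZ (n:ℤ)) := by
  rw [show ((n:ℤ)+1) = (((n+1:ℕ)):ℤ) by push_cast; ring, hZ_natcast, hZ_natcast, hP_rec]

/-- The exceptional Hermite polynomial `H_n^F` for `F = {1,2}` (so `u_F = 0`), evaluated
at `x`: a `3×3` Wronskian determinant. -/
noncomputable def excH12 (m : ℤ) (x : ℝ) : ℝ :=
  Matrix.det
    !![(hermiteZ m).eval x, (derivative (hermiteZ m)).eval x,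
         (derivative (derivative (hermiteZ m))).eval x;
       (hermiteP 1).eval x, (derivative (hermiteP 1)).eval x,
         (derivative (derivative (hermiteP 1))).eval x;
       (hermiteP 2).eval x, (derivative (hermiteP 2)).eval x,
         (derivative (derivative (hermiteP 2))).eval x]

lemma hP2 : hermiteP 2 = C 2 * X * (C 2 * X) - C 2 := by
  have h := hP_rec 1
  rw [hP1] at h
  rw [h]
  congr 1
  rw [derivative_mul, derivative_C, derivative_X]
  simp

lemma excH12_eq (m : ℤ) (x : ℝ) :
    excH12 m x = 16*(hermiteZ m).eval x - 32*(m:ℝ)*x*(hermiteZ (m-1)).eval x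
      + (8*x^2+4)*(4*(m:ℝ)*((m:ℝ)-1))*(hermiteZ (m-2)).eval x := by
  unfold excH12
  have d1 : derivative (hermiteZ m) = C (2*(m:ℝ)) * hermiteZ (m-1) := hZ_deriv m
  have d2 : derivative (derivative (hermiteZ m))
      = C (2*(m:ℝ)) * (C (2*((m:ℝ)-1)) * hermiteZ (m-2)) := by
    rw [d1, derivative_C_mul, hZ_deriv (m-1)]
    congr 2
    · push_cast; ring
    · congr 1; ring
  have dP1 : derivative (hermiteP 1) = C (2:ℝ) := by
    rw [hP1, derivative_mul, derivative_C, derivative_X]; simp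
  have dP2 : derivative (hermiteP 2) = C (4:ℝ) * (C 2 * X) := by
    have h := hP_deriv 1
    rw [hP1] at h
    norm_num at h
    exact h
  have ddP2 : derivative (derivative (hermiteP 2)) = C (8:ℝ) := by
    rw [dP2, derivative_C_mul, derivative_mul, derivative_C, derivative_X]
    simp
    norm_num [← C_mul]
  rw [d2, ddP2, d1, dP2, dP1, hP1, hP2]
  simp [Matrix.det_fin_three]
  ring

theorem excHermite_seven_term_recurrence (n : ℕ) (x : ℝ) :
    4 / 3 * (n : ℝ) * ((n : ℝ) - 1) * ((n : ℝ) - 2) * excH12 ((n : ℤ) - 3) x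
      + 2 * (n : ℝ) * ((n : ℝ) - 1) * excH12 ((n : ℤ) - 1) x
      + ((n : ℝ) - 2) * excH12 ((n : ℤ) + 1) x
      + ((n : ℝ) - 1) * ((n : ℝ) - 2) / (6 * ((n : ℝ) + 1) * ((n : ℝ) + 2))
          * excH12 ((n : ℤ) + 3) x
    = (4 * x ^ 3 / 3 + 2 * x) * excH12 (n : ℤ) x := by
  set A : ℤ → ℝ := fun m => (hermiteZ m).eval x with hA
  have F1 : ∀ m : ℤ, m < 0 → A m = 0 := by
    intro m h; simp [hA, hZ_neg h]
  have F2 : ∀ a b c : ℤ, b = a - 1 → c = a - 2 → 1 ≤ a →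
      A a = 2 * x * A b - 2 * ((a : ℝ) - 1) * A c := by
    rintro a b c rfl rfl ha
    obtain ⟨k, rfl⟩ : ∃ k : ℕ, a = (k : ℤ) + 1 := ⟨(a - 1).toNat, by omega⟩
    have h := hZ_rec k
    have hd := hZ_deriv (k : ℤ)
    rw [hd] at h
    have := congrArg (fun p => eval x p) h
    simp only [eval_sub, eval_mul, eval_C, eval_X] at this
    simp only [hA]
    rw [show (k : ℤ) + 1 - 1 = (k : ℤ) by ring, show (k : ℤ) + 1 - 2 = (k : ℤ) - 1 by ring]
    rw [this]
    push_cast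
    ring
  have E : ∀ m : ℤ, excH12 m x = 16 * A m - 32 * (m : ℝ) * x * A (m - 1)
      + (8 * x ^ 2 + 4) * (4 * (m : ℝ) * ((m : ℝ) - 1)) * A (m - 2) := fun m => excH12_eq m x
  rw [E ((n : ℤ) - 3), E ((n : ℤ) - 1), E ((n : ℤ) + 1), E ((n : ℤ) + 3), E (n : ℤ)]
  simp only [show (n:ℤ)-3-1 = (n:ℤ)-4 from by ring, show (n:ℤ)-3-2 = (n:ℤ)-5 from by ring,
    show (n:ℤ)-1-1 = (n:ℤ)-2 from by ring, show (n:ℤ)-1-2 = (n:ℤ)-3 from by ring,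
    show (n:ℤ)+1-1 = (n:ℤ) from by ring, show (n:ℤ)+1-2 = (n:ℤ)-1 from by ring,
    show (n:ℤ)+3-1 = (n:ℤ)+2 from by ring, show (n:ℤ)+3-2 = (n:ℤ)+1 from by ring]
  by_cases hn : 5 ≤ n
  · have hn' : (5:ℤ) ≤ (n:ℤ) := by exact_mod_cast hn
    have e3 : A ((n:ℤ)+3) = 2*x*A ((n:ℤ)+2) - 2*(((((n:ℤ)+3):ℤ):ℝ)-1)*A ((n:ℤ)+1) :=
      F2 ((n:ℤ)+3) ((n:ℤ)+2) ((n:ℤ)+1) (by ring) (by ring) (by omega)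
    have e2 : A ((n:ℤ)+2) = 2*x*A ((n:ℤ)+1) - 2*(((((n:ℤ)+2):ℤ):ℝ)-1)*A ((n:ℤ)) :=
      F2 ((n:ℤ)+2) ((n:ℤ)+1) ((n:ℤ)) (by ring) (by ring) (by omega)
    have e1 : A ((n:ℤ)+1) = 2*x*A ((n:ℤ)) - 2*(((((n:ℤ)+1):ℤ):ℝ)-1)*A ((n:ℤ)-1) :=
      F2 ((n:ℤ)+1) ((n:ℤ)) ((n:ℤ)-1) (by ring) (by ring) (by omega)
    have e0 : A ((n:ℤ)) = 2*x*A ((n:ℤ)-1) - 2*((((n:ℤ)):ℝ)-1)*A ((n:ℤ)-2) :=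
      F2 ((n:ℤ)) ((n:ℤ)-1) ((n:ℤ)-2) (by ring) (by ring) (by omega)
    have em1 : A ((n:ℤ)-1) = 2*x*A ((n:ℤ)-2) - 2*(((((n:ℤ)-1):ℤ):ℝ)-1)*A ((n:ℤ)-3) :=
      F2 ((n:ℤ)-1) ((n:ℤ)-2) ((n:ℤ)-3) (by ring) (by ring) (by omega)
    have em2 : A ((n:ℤ)-2) = 2*x*A ((n:ℤ)-3) - 2*(((((n:ℤ)-2):ℤ):ℝ)-1)*A ((n:ℤ)-4) :=
      F2 ((n:ℤ)-2) ((n:ℤ)-3) ((n:ℤ)-4) (by ring) (by ring) (by omega)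
    have em3 : A ((n:ℤ)-3) = 2*x*A ((n:ℤ)-4) - 2*(((((n:ℤ)-3):ℤ):ℝ)-1)*A ((n:ℤ)-5) :=
      F2 ((n:ℤ)-3) ((n:ℤ)-4) ((n:ℤ)-5) (by ring) (by ring) (by omega)
    rw [e3, e2, e1, e0, em1, em2, em3]
    have h1 : ((n:ℝ)+1) ≠ 0 := by positivity
    have h2 : ((n:ℝ)+2) ≠ 0 := by positivity
    push_cast
    field_simp
    ring
  · have z : ∀ m : ℤ, m < 0 → A m = 0 := F1
    interval_cases n <;>
    · norm_num
      have e7 : A 7 = 2*x*A 6 - 2*(((7:ℤ):ℝ)-1)*A 5 := F2 7 6 5 (by ring) (by ring) (by omega)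
      have e6 : A 6 = 2*x*A 5 - 2*(((6:ℤ):ℝ)-1)*A 4 := F2 6 5 4 (by ring) (by ring) (by omega)
      have e5 : A 5 = 2*x*A 4 - 2*(((5:ℤ):ℝ)-1)*A 3 := F2 5 4 3 (by ring) (by ring) (by omega)
      have e4 : A 4 = 2*x*A 3 - 2*(((4:ℤ):ℝ)-1)*A 2 := F2 4 3 2 (by ring) (by ring) (by omega)
      have e3 : A 3 = 2*x*A 2 - 2*(((3:ℤ):ℝ)-1)*A 1 := F2 3 2 1 (by ring) (by ring) (by omega)
      have e2 : A 2 = 2*x*A 1 - 2*(((2:ℤ):ℝ)-1)*A 0 := F2 2 1 0 (by ring) (by ring) (by omega)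
      have e1 : A 1 = 2*x*A 0 - 2*(((1:ℤ):ℝ)-1)*A (-1) := F2 1 0 (-1) (by ring) (by ring) (by omega)
      simp only [e7, e6, e5, e4, e3, e2, e1,
        z (-1) (by norm_num), z (-2) (by norm_num), z (-3) (by norm_num),
        z (-4) (by norm_num), z (-5) (by norm_num)]
      push_cast
      ring
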